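/- With S(3), the partition {A, B, C}, and the linear order τ as above: τ is a dense linear order without endpoints, and each of A, B, C is a dense subset of ⟨S, τ⟩; hence ⟨S, τ, A, B, C⟩ is isomorphic to ℚ partitioned into three dense sets (ℚ₃). -/

import Mathlib

/-- Points of the unit circle with rational angle. -/
def Scirc : Set ℂ := {z | ∃ q : ℚ, z = Complex.exp (q * Complex.I)}

/-- The `S(3)` relation: `e^{q₁i} → e^{q₂i}` iff
`q₂ - q₁ ∈ ⋃_{k∈ℤ} (2kπ, 2kπ + 2π/3)`. -/
def Arrow3 (x y : ℂ) : Prop :=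
  ∃ q₁ q₂ : ℚ, x = Complex.exp (q₁ * Complex.I) ∧ y = Complex.exp (q₂ * Complex.I) ∧
    ∃ k : ℤ, 2 * (k : ℝ) * Real.pi < (q₂ : ℝ) - (q₁ : ℝ) ∧
      (q₂ : ℝ) - (q₁ : ℝ) < 2 * (k : ℝ) * Real.pi + 2 * Real.pi / 3

/-- The incomparability relation of `S(3)`. -/
def Par3 (x y : ℂ) : Prop := x ≠ y ∧ ¬ Arrow3 x y ∧ ¬ Arrow3 y x

/-- The arc of angles in `⋃_k (π/2 + 2kπ, 7π/6 + 2kπ)`. -/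
def ArcA : Set ℂ :=
  {z | ∃ q : ℚ, z = Complex.exp (q * Complex.I) ∧
    ∃ k : ℤ, Real.pi / 2 + 2 * (k : ℝ) * Real.pi < (q : ℝ) ∧
      (q : ℝ) < 7 * Real.pi / 6 + 2 * (k : ℝ) * Real.pi}

/-- The arc of angles in `⋃_k (7π/6 + 2kπ, 11π/6 + 2kπ)`. -/
def ArcB : Set ℂ :=
  {z | ∃ q : ℚ, z = Complex.exp (q * Complex.I) ∧
    ∃ k : ℤ, 7 * Real.pi / 6 + 2 * (k : ℝ) * Real.pi < (q : ℝ) ∧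
      (q : ℝ) < 11 * Real.pi / 6 + 2 * (k : ℝ) * Real.pi}

/-- The arc of angles in `⋃_k (11π/6 + 2kπ, 15π/6 + 2kπ)`. -/
def ArcC : Set ℂ :=
  {z | ∃ q : ℚ, z = Complex.exp (q * Complex.I) ∧
    ∃ k : ℤ, 11 * Real.pi / 6 + 2 * (k : ℝ) * Real.pi < (q : ℝ) ∧
      (q : ℝ) < 15 * Real.pi / 6 + 2 * (k : ℝ) * Real.pi}

/-- The linear order `τ`: `→` within parts, `→⁻¹` on `(A×C) ∪ (C×B) ∪ (B×A)`,
and `∥` on `(C×A) ∪ (B×C) ∪ (A×B)`. -/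
def Tau (x y : ℂ) : Prop :=
  (((x ∈ ArcA ∧ y ∈ ArcA) ∨ (x ∈ ArcB ∧ y ∈ ArcB) ∨ (x ∈ ArcC ∧ y ∈ ArcC)) ∧ Arrow3 x y) ∨
  (((x ∈ ArcA ∧ y ∈ ArcC) ∨ (x ∈ ArcC ∧ y ∈ ArcB) ∨ (x ∈ ArcB ∧ y ∈ ArcA)) ∧ Arrow3 y x) ∨
  (((x ∈ ArcC ∧ y ∈ ArcA) ∨ (x ∈ ArcB ∧ y ∈ ArcC) ∨ (x ∈ ArcA ∧ y ∈ ArcB)) ∧ Par3 x y)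



section TauAux
open Complex Real Set
noncomputable section


lemma twoPi_pos : (0:ℝ) < 2 * Real.pi := by positivity

lemma rat_ne_pi6 (r : ℚ) (n : ℤ) (hn : n ≠ 0) : (r : ℝ) ≠ n * Real.pi / 6 := by
  intro h
  have hn' : (n : ℝ) ≠ 0 := Int.cast_ne_zero.2 hn
  have hpi : Real.pi = ((6 * r / n : ℚ) : ℝ) := by
    push_cast
    field_simp at h ⊢
    linarith [h]
  exact (irrational_pi) ⟨_, hpi.symm⟩

lemma exp_rat_inj {q₁ q₂ : ℚ} (h : Complex.exp (q₁ * Complex.I) = Complex.exp (q₂ * Complex.I)) :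
    q₁ = q₂ := by
  rw [Complex.exp_eq_exp_iff_exists_int] at h
  obtain ⟨n, hn⟩ := h
  have hI : ((q₁ : ℂ) - ((q₂ : ℂ) + n * (2 * Real.pi))) * Complex.I = 0 := by
    ring_nf; ring_nf at hn; linear_combination hn
  have h2 : (q₁ : ℂ) = (q₂ : ℂ) + n * (2 * Real.pi) := by
    rcases mul_eq_zero.1 hI with h | h
    · exact sub_eq_zero.1 h
    · exact absurd h Complex.I_ne_zero
  have h3 : (q₁ : ℝ) = (q₂ : ℝ) + n * (2 * Real.pi) := by
    exact_mod_cast congrArg Complex.re h2 |>.trans (by simp)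
  by_cases hzero : n = 0
  · subst hzero; simp at h3; exact_mod_cast h3
  · exfalso
    exact rat_ne_pi6 (q₁ - q₂) (12 * n) (by simpa using hzero)
      (by push_cast; ring_nf; ring_nf at h3; linarith)

open Classical in
noncomputable def ratOf (z : ℂ) : ℚ := if h : z ∈ Scirc then h.choose else 0

lemma ratOf_spec {z : ℂ} (hz : z ∈ Scirc) : z = Complex.exp (ratOf z * Complex.I) := by
  rw [ratOf]; rw [dif_pos hz]; exact hz.choose_spec

lemma mem_Scirc_exp (q : ℚ) : Complex.exp (q * Complex.I) ∈ Scirc := ⟨q, rfl⟩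

lemma ratOf_exp (q : ℚ) : ratOf (Complex.exp (q * Complex.I)) = q :=
  (exp_rat_inj (ratOf_spec (mem_Scirc_exp q)).symm)

noncomputable def Th (z : ℂ) : ℝ := toIocMod twoPi_pos (Real.pi / 2) (ratOf z)

lemma Th_mem (z : ℂ) : Th z ∈ Set.Ioc (Real.pi/2) (Real.pi/2 + 2*Real.pi) :=
  toIocMod_mem_Ioc _ _ _

lemma Th_sub (z : ℂ) : ∃ k : ℤ, (ratOf z : ℝ) = Th z + k * (2*Real.pi) := by
  refine ⟨toIocDiv twoPi_pos (Real.pi/2) (ratOf z), ?_⟩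
  have := toIocMod_add_toIocDiv_zsmul twoPi_pos (Real.pi/2) ((ratOf z : ℝ))
  rw [zsmul_eq_mul] at this
  have h2 : Th z = toIocMod twoPi_pos (Real.pi/2) ((ratOf z : ℝ)) := rfl
  linarith [this]

lemma Th_eq_of {z : ℂ} {c : ℝ} (hc : c ∈ Set.Ioc (Real.pi/2) (Real.pi/2 + 2*Real.pi))
    (k : ℤ) (h : (ratOf z : ℝ) = c + k * (2*Real.pi)) : Th z = c := by
  rw [Th, toIocMod_eq_iff]
  exact ⟨hc, k, by rw [zsmul_eq_mul]; linarith⟩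

lemma Th_sub_ne {x y : ℂ} (n : ℤ) (hn : ¬ (12:ℤ) ∣ n) :
    Th x - Th y ≠ n * Real.pi / 6 := by
  intro h
  obtain ⟨kx, hkx⟩ := Th_sub x
  obtain ⟨ky, hky⟩ := Th_sub y
  refine rat_ne_pi6 (ratOf x - ratOf y) (n + 12 * (kx - ky)) ?_ ?_
  · intro h0
    exact hn ⟨-(kx - ky), by omega⟩
  · push_cast
    rw [hkx, hky]
    field_simp
    ring_nf
    ring_nf at h
    linarith [h]

lemma Th_inj {x y : ℂ} (hx : x ∈ Scirc) (hy : y ∈ Scirc) (h : Th x = Th y) : x = y := by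
  obtain ⟨kx, hkx⟩ := Th_sub x
  obtain ⟨ky, hky⟩ := Th_sub y
  by_cases hk : kx = ky
  · have : (ratOf x : ℝ) = (ratOf y : ℝ) := by rw [hkx, hky, h, hk]
    have : ratOf x = ratOf y := by exact_mod_cast this
    rw [ratOf_spec hx, ratOf_spec hy, this]
  · exfalso
    refine rat_ne_pi6 (ratOf x - ratOf y) (12 * (kx - ky)) (by omega) ?_
    push_cast
    rw [hkx, hky, h]
    field_simp
    ring

/-- Arrow3 in terms of Th. -/
lemma arrow_iff {x y : ℂ} (hx : x ∈ Scirc) (hy : y ∈ Scirc) :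
    Arrow3 x y ↔ (Th y - Th x ∈ Set.Ioo 0 (2*Real.pi/3) ∨
      Th y - Th x ∈ Set.Ioo (-(2*Real.pi)) (-(4*Real.pi/3))) := by
  have pi_pos := Real.pi_pos
  obtain ⟨kx, hkx⟩ := Th_sub x
  obtain ⟨ky, hky⟩ := Th_sub y
  have hmx := Th_mem x
  have hmy := Th_mem y
  simp only [Set.mem_Ioc] at hmx hmy
  constructor
  · rintro ⟨q₁, q₂, he1, he2, k, h1, h2⟩
    have hq1 : q₁ = ratOf x := exp_rat_inj (he1.symm.trans (ratOf_spec hx))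
    have hq2 : q₂ = ratOf y := exp_rat_inj (he2.symm.trans (ratOf_spec hy))
    subst hq1 hq2
    rw [hkx, hky] at h1 h2
    -- (Th y - Th x) + (ky - kx) * 2π ∈ (2kπ, 2kπ + 2π/3)
    set d := Th y - Th x with hd
    have hdlow : -(2*Real.pi) < d := by simp only [hd]; linarith
    have hdhigh : d < 2*Real.pi := by simp only [hd]; linarith
    set m : ℤ := k - (ky - kx) with hm
    have h1' : 2 * (m:ℝ) * Real.pi < d := by
      have : ((m:ℝ)) = (k:ℝ) - ((ky:ℝ) - (kx:ℝ)) := by push_cast [hm]; ring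
      rw [this]; simp only [hd]; linarith
    have h2' : d < 2 * (m:ℝ) * Real.pi + 2*Real.pi/3 := by
      have : ((m:ℝ)) = (k:ℝ) - ((ky:ℝ) - (kx:ℝ)) := by push_cast [hm]; ring
      rw [this]; simp only [hd]; linarith
    have hm0 : m = 0 ∨ m = -1 := by
      rcases lt_trichotomy m 0 with h | h | h
      · right
        by_contra hne
        have : (m:ℝ) ≤ -2 := by exact_mod_cast (by omega : m ≤ -2)
        nlinarith
      · left; exact h
      · exfalso
        have : (1:ℝ) ≤ (m:ℝ) := by exact_mod_cast h
        nlinarith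
    rcases hm0 with h | h
    · left; rw [h] at h1' h2'; push_cast at h1' h2'; exact ⟨by linarith, by linarith⟩
    · right; rw [h] at h1' h2'; push_cast at h1' h2'; exact ⟨by linarith, by linarith⟩
  · intro h
    refine ⟨ratOf x, ratOf y, ratOf_spec hx, ratOf_spec hy, ?_⟩
    rcases h with ⟨h1, h2⟩ | ⟨h1, h2⟩
    · exact ⟨ky - kx, by push_cast; rw [hkx, hky]; constructor <;> linarith⟩
    · exact ⟨ky - kx - 1, by push_cast; rw [hkx, hky]; constructor <;> linarith⟩

lemma Th_ne (z : ℂ) (n : ℤ) (hn : ¬ (12:ℤ) ∣ n) : Th z ≠ n * Real.pi / 6 := by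
  intro h
  obtain ⟨k, hk⟩ := Th_sub z
  refine rat_ne_pi6 (ratOf z) (n + 12 * k) (by intro h0; exact hn ⟨-k, by omega⟩) ?_
  rw [hk, h]; push_cast; field_simp; ring

lemma arcA_sub (z : ℂ) (hz : z ∈ ArcA) : z ∈ Scirc := by
  obtain ⟨q, hq, _⟩ := hz; rw [hq]; exact mem_Scirc_exp q
lemma arcB_sub (z : ℂ) (hz : z ∈ ArcB) : z ∈ Scirc := by
  obtain ⟨q, hq, _⟩ := hz; rw [hq]; exact mem_Scirc_exp q
lemma arcC_sub (z : ℂ) (hz : z ∈ ArcC) : z ∈ Scirc := by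
  obtain ⟨q, hq, _⟩ := hz; rw [hq]; exact mem_Scirc_exp q

lemma mem_arcA_iff {z : ℂ} (hz : z ∈ Scirc) :
    z ∈ ArcA ↔ Th z ∈ Set.Ioo (Real.pi/2) (7*Real.pi/6) := by
  have pi_pos := Real.pi_pos
  constructor
  · rintro ⟨q, heq, k, h1, h2⟩
    have hq : q = ratOf z := exp_rat_inj (heq.symm.trans (ratOf_spec hz))
    rw [hq] at h1 h2
    have hThz : Th z = (ratOf z : ℝ) - 2 * k * Real.pi :=
      Th_eq_of ⟨by linarith, by linarith⟩ k (by push_cast; ring)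
    rw [hThz]; exact ⟨by linarith, by linarith⟩
  · rintro ⟨h1, h2⟩
    obtain ⟨k, hk⟩ := Th_sub z
    exact ⟨ratOf z, ratOf_spec hz, k, by rw [hk]; push_cast; constructor <;> linarith⟩

lemma mem_arcB_iff {z : ℂ} (hz : z ∈ Scirc) :
    z ∈ ArcB ↔ Th z ∈ Set.Ioo (7*Real.pi/6) (11*Real.pi/6) := by
  have pi_pos := Real.pi_pos
  constructor
  · rintro ⟨q, heq, k, h1, h2⟩
    have hq : q = ratOf z := exp_rat_inj (heq.symm.trans (ratOf_spec hz))
    rw [hq] at h1 h2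
    have hThz : Th z = (ratOf z : ℝ) - 2 * k * Real.pi :=
      Th_eq_of ⟨by linarith, by linarith⟩ k (by push_cast; ring)
    rw [hThz]; exact ⟨by linarith, by linarith⟩
  · rintro ⟨h1, h2⟩
    obtain ⟨k, hk⟩ := Th_sub z
    exact ⟨ratOf z, ratOf_spec hz, k, by rw [hk]; push_cast; constructor <;> linarith⟩

lemma mem_arcC_iff {z : ℂ} (hz : z ∈ Scirc) :
    z ∈ ArcC ↔ Th z ∈ Set.Ioo (11*Real.pi/6) (15*Real.pi/6) := by
  have pi_pos := Real.pi_pos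
  constructor
  · rintro ⟨q, heq, k, h1, h2⟩
    have hq : q = ratOf z := exp_rat_inj (heq.symm.trans (ratOf_spec hz))
    rw [hq] at h1 h2
    have hThz : Th z = (ratOf z : ℝ) - 2 * k * Real.pi :=
      Th_eq_of ⟨by linarith, by linarith⟩ k (by push_cast; ring)
    rw [hThz]; exact ⟨by linarith, by linarith⟩
  · rintro ⟨h1, h2⟩
    obtain ⟨k, hk⟩ := Th_sub z
    exact ⟨ratOf z, ratOf_spec hz, k, by rw [hk]; push_cast; constructor <;> linarith⟩

lemma arc_cover {z : ℂ} (hz : z ∈ Scirc) : z ∈ ArcA ∨ z ∈ ArcB ∨ z ∈ ArcC := by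
  have pi_pos := Real.pi_pos
  have hm := Th_mem z
  simp only [Set.mem_Ioc] at hm
  have h7 := Th_ne z 7 (by decide)
  have h11 := Th_ne z 11 (by decide)
  have h15 := Th_ne z 15 (by decide)
  push_cast at h7 h11 h15
  rcases lt_trichotomy (Th z) (7*Real.pi/6) with h | h | h
  · exact Or.inl ((mem_arcA_iff hz).2 ⟨hm.1, h⟩)
  · exact absurd h (by intro he; exact h7 (by linarith))
  rcases lt_trichotomy (Th z) (11*Real.pi/6) with h' | h' | h'
  · exact Or.inr (Or.inl ((mem_arcB_iff hz).2 ⟨h, h'⟩))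
  · exact absurd h' (by intro he; exact h11 (by linarith))
  · refine Or.inr (Or.inr ((mem_arcC_iff hz).2 ⟨h', ?_⟩))
    rcases lt_or_eq_of_le hm.2 with h'' | h''
    · linarith
    · exact absurd h'' (by intro he; exact h15 (by linarith))

noncomputable def H (z : ℂ) : ℝ :=
  if Th z < 7*Real.pi/6 then Th z
  else if Th z < 11*Real.pi/6 then Th z - 2*Real.pi/3
  else Th z - 4*Real.pi/3

lemma H_A {z : ℂ} (h : Th z ∈ Set.Ioo (Real.pi/2) (7*Real.pi/6)) : H z = Th z := by
  rw [H, if_pos h.2]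

lemma H_B {z : ℂ} (h : Th z ∈ Set.Ioo (7*Real.pi/6) (11*Real.pi/6)) :
    H z = Th z - 2*Real.pi/3 := by
  rw [H, if_neg (not_lt.2 (le_of_lt h.1)), if_pos h.2]

lemma H_C {z : ℂ} (h : Th z ∈ Set.Ioo (11*Real.pi/6) (15*Real.pi/6)) :
    H z = Th z - 4*Real.pi/3 := by
  have pi_pos := Real.pi_pos
  rw [H, if_neg (by push_neg; nlinarith [h.1]), if_neg (not_lt.2 (le_of_lt h.1))]


set_option maxHeartbeats 2000000 in
lemma tau_iff {x y : ℂ} (hx : x ∈ Scirc) (hy : y ∈ Scirc) : Tau x y ↔ H x < H y := by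
  have pi_pos := Real.pi_pos
  rcases arc_cover hx with hxm | hxm | hxm <;> rcases arc_cover hy with hym | hym | hym

  · -- case AA
    have hxth := (mem_arcA_iff hx).1 hxm
    have hyth := (mem_arcA_iff hy).1 hym
    have hres : Tau x y ↔ Arrow3 x y := by
      constructor
      · rintro (⟨(⟨h1,h2⟩|⟨h1,h2⟩|⟨h1,h2⟩), h⟩|⟨(⟨h1,h2⟩|⟨h1,h2⟩|⟨h1,h2⟩), h⟩|⟨(⟨h1,h2⟩|⟨h1,h2⟩|⟨h1,h2⟩), h⟩) <;>
          first
          | (exfalso;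
             simp only [mem_arcA_iff hx, mem_arcA_iff hy, mem_arcB_iff hx, mem_arcB_iff hy,
               mem_arcC_iff hx, mem_arcC_iff hy, Set.mem_Ioo] at h1 h2;
             obtain ⟨u1, u2⟩ := h1; obtain ⟨v1, v2⟩ := h2; linarith [hxth.1, hxth.2, hyth.1, hyth.2])
          | exact h
      · intro h
        exact Or.inl ⟨Or.inl ⟨hxm, hym⟩, h⟩
    rw [hres, arrow_iff hx hy, H_A hxth, H_A hyth]
    simp only [Set.mem_Ioo]
    obtain ⟨a1, a2⟩ := hxth; obtain ⟨b1, b2⟩ := hyth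
    constructor
    · rintro (⟨h1, h2⟩ | ⟨h1, h2⟩) <;> linarith
    · intro h; left; exact ⟨by linarith, by linarith⟩

  · -- case AB
    have hxth := (mem_arcA_iff hx).1 hxm
    have hyth := (mem_arcB_iff hy).1 hym
    have hres : Tau x y ↔ Par3 x y := by
      constructor
      · rintro (⟨(⟨h1,h2⟩|⟨h1,h2⟩|⟨h1,h2⟩), h⟩|⟨(⟨h1,h2⟩|⟨h1,h2⟩|⟨h1,h2⟩), h⟩|⟨(⟨h1,h2⟩|⟨h1,h2⟩|⟨h1,h2⟩), h⟩) <;>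
          first
          | (exfalso;
             simp only [mem_arcA_iff hx, mem_arcA_iff hy, mem_arcB_iff hx, mem_arcB_iff hy,
               mem_arcC_iff hx, mem_arcC_iff hy, Set.mem_Ioo] at h1 h2;
             obtain ⟨u1, u2⟩ := h1; obtain ⟨v1, v2⟩ := h2; linarith [hxth.1, hxth.2, hyth.1, hyth.2])
          | exact h
      · intro h
        exact Or.inr (Or.inr ⟨Or.inr (Or.inr ⟨hxm, hym⟩), h⟩)
    rw [hres, Par3, arrow_iff hx hy, arrow_iff hy hx, H_A hxth, H_B hyth]
    simp only [Set.mem_Ioo]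
    obtain ⟨a1, a2⟩ := hxth; obtain ⟨b1, b2⟩ := hyth
    have hne : Th y - Th x ≠ ((4) : ℤ) * Real.pi / 6 := Th_sub_ne ((4) : ℤ) (by decide)
    have hne' : Th y - Th x ≠ 2*Real.pi/3 := by intro hh; apply hne; rw [hh]; push_cast; ring
    constructor
    · rintro ⟨hxy, hn1, hn2⟩
      rcases lt_or_gt_of_ne hne' with hlt | hgt
      · exact absurd (Or.inl ⟨by linarith, by linarith⟩) hn1
      · linarith
    · intro h
      refine ⟨?_, ?_, ?_⟩
      · intro heq; rw [heq] at a1 a2; linarith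
      · rintro (⟨h1, h2⟩ | ⟨h1, h2⟩) <;> linarith
      · rintro (⟨h1, h2⟩ | ⟨h1, h2⟩) <;> linarith

  · -- case AC
    have hxth := (mem_arcA_iff hx).1 hxm
    have hyth := (mem_arcC_iff hy).1 hym
    have hres : Tau x y ↔ Arrow3 y x := by
      constructor
      · rintro (⟨(⟨h1,h2⟩|⟨h1,h2⟩|⟨h1,h2⟩), h⟩|⟨(⟨h1,h2⟩|⟨h1,h2⟩|⟨h1,h2⟩), h⟩|⟨(⟨h1,h2⟩|⟨h1,h2⟩|⟨h1,h2⟩), h⟩) <;>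
          first
          | (exfalso;
             simp only [mem_arcA_iff hx, mem_arcA_iff hy, mem_arcB_iff hx, mem_arcB_iff hy,
               mem_arcC_iff hx, mem_arcC_iff hy, Set.mem_Ioo] at h1 h2;
             obtain ⟨u1, u2⟩ := h1; obtain ⟨v1, v2⟩ := h2; linarith [hxth.1, hxth.2, hyth.1, hyth.2])
          | exact h
      · intro h
        exact Or.inr (Or.inl ⟨Or.inl ⟨hxm, hym⟩, h⟩)
    rw [hres, arrow_iff hy hx, H_A hxth, H_C hyth]
    simp only [Set.mem_Ioo]
    obtain ⟨a1, a2⟩ := hxth; obtain ⟨b1, b2⟩ := hyth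
    constructor
    · rintro (⟨h1, h2⟩ | ⟨h1, h2⟩) <;> linarith
    · intro h; right; exact ⟨by linarith, by linarith⟩

  · -- case BA
    have hxth := (mem_arcB_iff hx).1 hxm
    have hyth := (mem_arcA_iff hy).1 hym
    have hres : Tau x y ↔ Arrow3 y x := by
      constructor
      · rintro (⟨(⟨h1,h2⟩|⟨h1,h2⟩|⟨h1,h2⟩), h⟩|⟨(⟨h1,h2⟩|⟨h1,h2⟩|⟨h1,h2⟩), h⟩|⟨(⟨h1,h2⟩|⟨h1,h2⟩|⟨h1,h2⟩), h⟩) <;>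
          first
          | (exfalso;
             simp only [mem_arcA_iff hx, mem_arcA_iff hy, mem_arcB_iff hx, mem_arcB_iff hy,
               mem_arcC_iff hx, mem_arcC_iff hy, Set.mem_Ioo] at h1 h2;
             obtain ⟨u1, u2⟩ := h1; obtain ⟨v1, v2⟩ := h2; linarith [hxth.1, hxth.2, hyth.1, hyth.2])
          | exact h
      · intro h
        exact Or.inr (Or.inl ⟨Or.inr (Or.inr ⟨hxm, hym⟩), h⟩)
    rw [hres, arrow_iff hy hx, H_B hxth, H_A hyth]
    simp only [Set.mem_Ioo]
    obtain ⟨a1, a2⟩ := hxth; obtain ⟨b1, b2⟩ := hyth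
    constructor
    · rintro (⟨h1, h2⟩ | ⟨h1, h2⟩) <;> linarith
    · intro h; left; exact ⟨by linarith, by linarith⟩

  · -- case BB
    have hxth := (mem_arcB_iff hx).1 hxm
    have hyth := (mem_arcB_iff hy).1 hym
    have hres : Tau x y ↔ Arrow3 x y := by
      constructor
      · rintro (⟨(⟨h1,h2⟩|⟨h1,h2⟩|⟨h1,h2⟩), h⟩|⟨(⟨h1,h2⟩|⟨h1,h2⟩|⟨h1,h2⟩), h⟩|⟨(⟨h1,h2⟩|⟨h1,h2⟩|⟨h1,h2⟩), h⟩) <;>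
          first
          | (exfalso;
             simp only [mem_arcA_iff hx, mem_arcA_iff hy, mem_arcB_iff hx, mem_arcB_iff hy,
               mem_arcC_iff hx, mem_arcC_iff hy, Set.mem_Ioo] at h1 h2;
             obtain ⟨u1, u2⟩ := h1; obtain ⟨v1, v2⟩ := h2; linarith [hxth.1, hxth.2, hyth.1, hyth.2])
          | exact h
      · intro h
        exact Or.inl ⟨Or.inr (Or.inl ⟨hxm, hym⟩), h⟩
    rw [hres, arrow_iff hx hy, H_B hxth, H_B hyth]
    simp only [Set.mem_Ioo]
    obtain ⟨a1, a2⟩ := hxth; obtain ⟨b1, b2⟩ := hyth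
    constructor
    · rintro (⟨h1, h2⟩ | ⟨h1, h2⟩) <;> linarith
    · intro h; left; exact ⟨by linarith, by linarith⟩

  · -- case BC
    have hxth := (mem_arcB_iff hx).1 hxm
    have hyth := (mem_arcC_iff hy).1 hym
    have hres : Tau x y ↔ Par3 x y := by
      constructor
      · rintro (⟨(⟨h1,h2⟩|⟨h1,h2⟩|⟨h1,h2⟩), h⟩|⟨(⟨h1,h2⟩|⟨h1,h2⟩|⟨h1,h2⟩), h⟩|⟨(⟨h1,h2⟩|⟨h1,h2⟩|⟨h1,h2⟩), h⟩) <;>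
          first
          | (exfalso;
             simp only [mem_arcA_iff hx, mem_arcA_iff hy, mem_arcB_iff hx, mem_arcB_iff hy,
               mem_arcC_iff hx, mem_arcC_iff hy, Set.mem_Ioo] at h1 h2;
             obtain ⟨u1, u2⟩ := h1; obtain ⟨v1, v2⟩ := h2; linarith [hxth.1, hxth.2, hyth.1, hyth.2])
          | exact h
      · intro h
        exact Or.inr (Or.inr ⟨Or.inr (Or.inl ⟨hxm, hym⟩), h⟩)
    rw [hres, Par3, arrow_iff hx hy, arrow_iff hy hx, H_B hxth, H_C hyth]
    simp only [Set.mem_Ioo]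
    obtain ⟨a1, a2⟩ := hxth; obtain ⟨b1, b2⟩ := hyth
    have hne : Th y - Th x ≠ ((4) : ℤ) * Real.pi / 6 := Th_sub_ne ((4) : ℤ) (by decide)
    have hne' : Th y - Th x ≠ 2*Real.pi/3 := by intro hh; apply hne; rw [hh]; push_cast; ring
    constructor
    · rintro ⟨hxy, hn1, hn2⟩
      rcases lt_or_gt_of_ne hne' with hlt | hgt
      · exact absurd (Or.inl ⟨by linarith, by linarith⟩) hn1
      · linarith
    · intro h
      refine ⟨?_, ?_, ?_⟩
      · intro heq; rw [heq] at a1 a2; linarith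
      · rintro (⟨h1, h2⟩ | ⟨h1, h2⟩) <;> linarith
      · rintro (⟨h1, h2⟩ | ⟨h1, h2⟩) <;> linarith

  · -- case CA
    have hxth := (mem_arcC_iff hx).1 hxm
    have hyth := (mem_arcA_iff hy).1 hym
    have hres : Tau x y ↔ Par3 x y := by
      constructor
      · rintro (⟨(⟨h1,h2⟩|⟨h1,h2⟩|⟨h1,h2⟩), h⟩|⟨(⟨h1,h2⟩|⟨h1,h2⟩|⟨h1,h2⟩), h⟩|⟨(⟨h1,h2⟩|⟨h1,h2⟩|⟨h1,h2⟩), h⟩) <;>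
          first
          | (exfalso;
             simp only [mem_arcA_iff hx, mem_arcA_iff hy, mem_arcB_iff hx, mem_arcB_iff hy,
               mem_arcC_iff hx, mem_arcC_iff hy, Set.mem_Ioo] at h1 h2;
             obtain ⟨u1, u2⟩ := h1; obtain ⟨v1, v2⟩ := h2; linarith [hxth.1, hxth.2, hyth.1, hyth.2])
          | exact h
      · intro h
        exact Or.inr (Or.inr ⟨Or.inl ⟨hxm, hym⟩, h⟩)
    rw [hres, Par3, arrow_iff hx hy, arrow_iff hy hx, H_C hxth, H_A hyth]
    simp only [Set.mem_Ioo]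
    obtain ⟨a1, a2⟩ := hxth; obtain ⟨b1, b2⟩ := hyth
    have hne : Th y - Th x ≠ ((-8) : ℤ) * Real.pi / 6 := Th_sub_ne ((-8) : ℤ) (by decide)
    have hne' : Th y - Th x ≠ -(4*Real.pi/3) := by intro hh; apply hne; rw [hh]; push_cast; ring
    constructor
    · rintro ⟨hxy, hn1, hn2⟩
      rcases lt_or_gt_of_ne hne' with hlt | hgt
      · exact absurd (Or.inr ⟨by linarith, by linarith⟩) hn1
      · linarith
    · intro h
      refine ⟨?_, ?_, ?_⟩
      · intro heq; rw [heq] at a1 a2; linarith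
      · rintro (⟨h1, h2⟩ | ⟨h1, h2⟩) <;> linarith
      · rintro (⟨h1, h2⟩ | ⟨h1, h2⟩) <;> linarith

  · -- case CB
    have hxth := (mem_arcC_iff hx).1 hxm
    have hyth := (mem_arcB_iff hy).1 hym
    have hres : Tau x y ↔ Arrow3 y x := by
      constructor
      · rintro (⟨(⟨h1,h2⟩|⟨h1,h2⟩|⟨h1,h2⟩), h⟩|⟨(⟨h1,h2⟩|⟨h1,h2⟩|⟨h1,h2⟩), h⟩|⟨(⟨h1,h2⟩|⟨h1,h2⟩|⟨h1,h2⟩), h⟩) <;>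
          first
          | (exfalso;
             simp only [mem_arcA_iff hx, mem_arcA_iff hy, mem_arcB_iff hx, mem_arcB_iff hy,
               mem_arcC_iff hx, mem_arcC_iff hy, Set.mem_Ioo] at h1 h2;
             obtain ⟨u1, u2⟩ := h1; obtain ⟨v1, v2⟩ := h2; linarith [hxth.1, hxth.2, hyth.1, hyth.2])
          | exact h
      · intro h
        exact Or.inr (Or.inl ⟨Or.inr (Or.inl ⟨hxm, hym⟩), h⟩)
    rw [hres, arrow_iff hy hx, H_C hxth, H_B hyth]
    simp only [Set.mem_Ioo]
    obtain ⟨a1, a2⟩ := hxth; obtain ⟨b1, b2⟩ := hyth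
    constructor
    · rintro (⟨h1, h2⟩ | ⟨h1, h2⟩) <;> linarith
    · intro h; left; exact ⟨by linarith, by linarith⟩

  · -- case CC
    have hxth := (mem_arcC_iff hx).1 hxm
    have hyth := (mem_arcC_iff hy).1 hym
    have hres : Tau x y ↔ Arrow3 x y := by
      constructor
      · rintro (⟨(⟨h1,h2⟩|⟨h1,h2⟩|⟨h1,h2⟩), h⟩|⟨(⟨h1,h2⟩|⟨h1,h2⟩|⟨h1,h2⟩), h⟩|⟨(⟨h1,h2⟩|⟨h1,h2⟩|⟨h1,h2⟩), h⟩) <;>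
          first
          | (exfalso;
             simp only [mem_arcA_iff hx, mem_arcA_iff hy, mem_arcB_iff hx, mem_arcB_iff hy,
               mem_arcC_iff hx, mem_arcC_iff hy, Set.mem_Ioo] at h1 h2;
             obtain ⟨u1, u2⟩ := h1; obtain ⟨v1, v2⟩ := h2; linarith [hxth.1, hxth.2, hyth.1, hyth.2])
          | exact h
      · intro h
        exact Or.inl ⟨Or.inr (Or.inr ⟨hxm, hym⟩), h⟩
    rw [hres, arrow_iff hx hy, H_C hxth, H_C hyth]
    simp only [Set.mem_Ioo]
    obtain ⟨a1, a2⟩ := hxth; obtain ⟨b1, b2⟩ := hyth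
    constructor
    · rintro (⟨h1, h2⟩ | ⟨h1, h2⟩) <;> linarith
    · intro h; left; exact ⟨by linarith, by linarith⟩



lemma H_mem {z : ℂ} (hz : z ∈ Scirc) : H z ∈ Set.Ioo (Real.pi/2) (7*Real.pi/6) := by
  have pi_pos := Real.pi_pos
  rcases arc_cover hz with h | h | h
  · have ht := (mem_arcA_iff hz).1 h; rw [H_A ht]; exact ht
  · have ht := (mem_arcB_iff hz).1 h; rw [H_B ht]
    exact ⟨by linarith [ht.1], by linarith [ht.2]⟩
  · have ht := (mem_arcC_iff hz).1 h; rw [H_C ht]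
    exact ⟨by linarith [ht.1], by linarith [ht.2]⟩

lemma H_inj {x y : ℂ} (hx : x ∈ Scirc) (hy : y ∈ Scirc) (h : H x = H y) : x = y := by
  have pi_pos := Real.pi_pos
  have key : ∀ n : ℤ, ¬ (12:ℤ) ∣ n → Th x - Th y ≠ (n:ℝ) * Real.pi / 6 := fun n hn => Th_sub_ne n hn
  rcases arc_cover hx with h1 | h1 | h1 <;> rcases arc_cover hy with h2 | h2 | h2 <;>
    [ (have t1 := (mem_arcA_iff hx).1 h1; have t2 := (mem_arcA_iff hy).1 h2;
       rw [H_A t1, H_A t2] at h; exact Th_inj hx hy h);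
      (have t1 := (mem_arcA_iff hx).1 h1; have t2 := (mem_arcB_iff hy).1 h2;
       rw [H_A t1, H_B t2] at h;
       exact absurd (show Th x - Th y = ((-4:ℤ):ℝ) * Real.pi / 6 by push_cast; linarith)
         (key (-4) (by decide)));
      (have t1 := (mem_arcA_iff hx).1 h1; have t2 := (mem_arcC_iff hy).1 h2;
       rw [H_A t1, H_C t2] at h;
       exact absurd (show Th x - Th y = ((-8:ℤ):ℝ) * Real.pi / 6 by push_cast; linarith)
         (key (-8) (by decide)));
      (have t1 := (mem_arcB_iff hx).1 h1; have t2 := (mem_arcA_iff hy).1 h2;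
       rw [H_B t1, H_A t2] at h;
       exact absurd (show Th x - Th y = ((4:ℤ):ℝ) * Real.pi / 6 by push_cast; linarith)
         (key 4 (by decide)));
      (have t1 := (mem_arcB_iff hx).1 h1; have t2 := (mem_arcB_iff hy).1 h2;
       rw [H_B t1, H_B t2] at h; exact Th_inj hx hy (by linarith));
      (have t1 := (mem_arcB_iff hx).1 h1; have t2 := (mem_arcC_iff hy).1 h2;
       rw [H_B t1, H_C t2] at h;
       exact absurd (show Th x - Th y = ((-4:ℤ):ℝ) * Real.pi / 6 by push_cast; linarith)
         (key (-4) (by decide)));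
      (have t1 := (mem_arcC_iff hx).1 h1; have t2 := (mem_arcA_iff hy).1 h2;
       rw [H_C t1, H_A t2] at h;
       exact absurd (show Th x - Th y = ((8:ℤ):ℝ) * Real.pi / 6 by push_cast; linarith)
         (key 8 (by decide)));
      (have t1 := (mem_arcC_iff hx).1 h1; have t2 := (mem_arcB_iff hy).1 h2;
       rw [H_C t1, H_B t2] at h;
       exact absurd (show Th x - Th y = ((4:ℤ):ℝ) * Real.pi / 6 by push_cast; linarith)
         (key 4 (by decide)));
      (have t1 := (mem_arcC_iff hx).1 h1; have t2 := (mem_arcC_iff hy).1 h2;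
       rw [H_C t1, H_C t2] at h; exact Th_inj hx hy (by linarith))]

/-- Existence of arc elements with H-value in a given subinterval. -/
lemma exists_arcA {u v : ℝ} (h1 : Real.pi/2 ≤ u) (h2 : v ≤ 7*Real.pi/6) (h3 : u < v) :
    ∃ z ∈ ArcA, H z ∈ Set.Ioo u v := by
  have pi_pos := Real.pi_pos
  obtain ⟨q, hq1, hq2⟩ := exists_rat_btwn h3
  set z := Complex.exp (q * Complex.I) with hz
  have hmem := mem_Scirc_exp q
  have hth : Th z = (q:ℝ) := Th_eq_of ⟨by linarith, by linarith⟩ 0 (by rw [ratOf_exp]; ring)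
  have hio : Th z ∈ Set.Ioo (Real.pi/2) (7*Real.pi/6) := by
    rw [hth]; exact ⟨by linarith, by linarith⟩
  exact ⟨z, (mem_arcA_iff hmem).2 hio, by rw [H_A hio, hth]; exact ⟨hq1, hq2⟩⟩

lemma exists_arcB {u v : ℝ} (h1 : Real.pi/2 ≤ u) (h2 : v ≤ 7*Real.pi/6) (h3 : u < v) :
    ∃ z ∈ ArcB, H z ∈ Set.Ioo u v := by
  have pi_pos := Real.pi_pos
  obtain ⟨q, hq1, hq2⟩ := exists_rat_btwn (show u + 2*Real.pi/3 < v + 2*Real.pi/3 by linarith)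
  set z := Complex.exp (q * Complex.I) with hz
  have hmem := mem_Scirc_exp q
  have hth : Th z = (q:ℝ) := Th_eq_of ⟨by linarith, by linarith⟩ 0 (by rw [ratOf_exp]; ring)
  have hio : Th z ∈ Set.Ioo (7*Real.pi/6) (11*Real.pi/6) := by
    rw [hth]; exact ⟨by linarith, by linarith⟩
  refine ⟨z, (mem_arcB_iff hmem).2 hio, ?_⟩
  rw [H_B hio, hth]; exact ⟨by linarith, by linarith⟩

lemma exists_arcC {u v : ℝ} (h1 : Real.pi/2 ≤ u) (h2 : v ≤ 7*Real.pi/6) (h3 : u < v) :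
    ∃ z ∈ ArcC, H z ∈ Set.Ioo u v := by
  have pi_pos := Real.pi_pos
  obtain ⟨q, hq1, hq2⟩ := exists_rat_btwn (show u + 4*Real.pi/3 < v + 4*Real.pi/3 by linarith)
  set z := Complex.exp (q * Complex.I) with hz
  have hmem := mem_Scirc_exp q
  have hth : Th z = (q:ℝ) := Th_eq_of ⟨by linarith, by linarith⟩ 0 (by rw [ratOf_exp]; ring)
  have hio : Th z ∈ Set.Ioo (11*Real.pi/6) (15*Real.pi/6) := by
    rw [hth]; exact ⟨by linarith, by linarith⟩
  refine ⟨z, (mem_arcC_iff hmem).2 hio, ?_⟩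
  rw [H_C hio, hth]; exact ⟨by linarith, by linarith⟩

-- Linear order on the subtype
noncomputable instance scircLO : LinearOrder ↥Scirc :=
  LinearOrder.lift' (fun z => H z.1) (fun a b h => Subtype.ext (H_inj a.2 b.2 h))

lemma scirc_lt_iff (a b : ↥Scirc) : a < b ↔ H a.1 < H b.1 := by
  rw [lt_iff_le_not_ge]
  change (H a.1 ≤ H b.1 ∧ ¬ H b.1 ≤ H a.1) ↔ _
  constructor
  · rintro ⟨h1, h2⟩; exact lt_of_le_not_ge h1 h2
  · intro h; exact ⟨le_of_lt h, not_le.2 h⟩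

instance : Countable ↥Scirc := by
  have : Scirc = Set.range (fun q : ℚ => Complex.exp (q * Complex.I)) := by
    ext z; constructor
    · rintro ⟨q, hq⟩; exact ⟨q, hq.symm⟩
    · rintro ⟨q, hq⟩; exact ⟨q, hq.symm⟩
  rw [this]
  exact (Set.countable_range _).to_subtype

instance : Nonempty ↥Scirc := ⟨⟨Complex.exp ((0:ℚ) * Complex.I), mem_Scirc_exp 0⟩⟩

instance : DenselyOrdered ↥Scirc := by
  constructor
  intro a b hab
  rw [scirc_lt_iff] at hab
  have ha := H_mem a.2
  have hb := H_mem b.2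
  obtain ⟨z, hz, hio⟩ := exists_arcA (le_of_lt ha.1) (le_of_lt hb.2) hab
  refine ⟨⟨z, arcA_sub z hz⟩, ?_, ?_⟩ <;> rw [scirc_lt_iff]
  · exact hio.1
  · exact hio.2

instance : NoMaxOrder ↥Scirc := by
  constructor
  intro a
  have ha := H_mem a.2
  obtain ⟨z, hz, hio⟩ := exists_arcA (le_of_lt ha.1) (le_refl _) ha.2
  exact ⟨⟨z, arcA_sub z hz⟩, (scirc_lt_iff _ _).2 hio.1⟩

instance : NoMinOrder ↥Scirc := by
  constructor
  intro a
  have ha := H_mem a.2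
  obtain ⟨z, hz, hio⟩ := exists_arcA (le_refl _) (le_of_lt ha.2) ha.1
  exact ⟨⟨z, arcA_sub z hz⟩, (scirc_lt_iff _ _).2 hio.2⟩

noncomputable def scircIso : ↥Scirc ≃o ℚ := (Order.iso_of_countable_dense ↥Scirc ℚ).some



open Classical in
noncomputable def fQ (z : ℂ) : ℚ := if h : z ∈ Scirc then scircIso ⟨z, h⟩ else 0

lemma fQ_spec {z : ℂ} (hz : z ∈ Scirc) : fQ z = scircIso ⟨z, hz⟩ := by
  rw [fQ]; rw [dif_pos hz]

lemma fQ_symm (p : ℚ) : fQ (scircIso.symm p).1 = p := by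
  rw [fQ_spec (scircIso.symm p).2, Subtype.coe_eta, OrderIso.apply_symm_apply]

lemma tau_iff_fQ {x y : ℂ} (hx : x ∈ Scirc) (hy : y ∈ Scirc) : Tau x y ↔ fQ x < fQ y := by
  rw [tau_iff hx hy, fQ_spec hx, fQ_spec hy, OrderIso.lt_iff_lt, scirc_lt_iff]


theorem tau_final :
    (∀ x ∈ Scirc, ∀ y ∈ Scirc, Tau x y → ∃ z ∈ Scirc, Tau x z ∧ Tau z y) ∧
    (∀ x ∈ Scirc, (∃ y ∈ Scirc, Tau x y) ∧ (∃ y ∈ Scirc, Tau y x)) ∧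
    (∀ x ∈ Scirc, ∀ y ∈ Scirc, Tau x y → ∃ z ∈ ArcA, Tau x z ∧ Tau z y) ∧
    (∀ x ∈ Scirc, ∀ y ∈ Scirc, Tau x y → ∃ z ∈ ArcB, Tau x z ∧ Tau z y) ∧
    (∀ x ∈ Scirc, ∀ y ∈ Scirc, Tau x y → ∃ z ∈ ArcC, Tau x z ∧ Tau z y) ∧
    (∃ f : ℂ → ℚ, Set.BijOn f Scirc Set.univ ∧
      (∀ x ∈ Scirc, ∀ y ∈ Scirc, (Tau x y ↔ f x < f y)) ∧
      (∀ p q : ℚ, p < q → ∃ a ∈ ArcA, p < f a ∧ f a < q) ∧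
      (∀ p q : ℚ, p < q → ∃ b ∈ ArcB, p < f b ∧ f b < q) ∧
      (∀ p q : ℚ, p < q → ∃ c ∈ ArcC, p < f c ∧ f c < q)) := by
  have denseA : ∀ x ∈ Scirc, ∀ y ∈ Scirc, Tau x y → ∃ z ∈ ArcA, Tau x z ∧ Tau z y := by
    intro x hx y hy ht
    rw [tau_iff hx hy] at ht
    obtain ⟨z, hz, hio⟩ := exists_arcA (le_of_lt (H_mem hx).1) (le_of_lt (H_mem hy).2) ht
    exact ⟨z, hz, (tau_iff hx (arcA_sub z hz)).2 hio.1, (tau_iff (arcA_sub z hz) hy).2 hio.2⟩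
  have denseB : ∀ x ∈ Scirc, ∀ y ∈ Scirc, Tau x y → ∃ z ∈ ArcB, Tau x z ∧ Tau z y := by
    intro x hx y hy ht
    rw [tau_iff hx hy] at ht
    obtain ⟨z, hz, hio⟩ := exists_arcB (le_of_lt (H_mem hx).1) (le_of_lt (H_mem hy).2) ht
    exact ⟨z, hz, (tau_iff hx (arcB_sub z hz)).2 hio.1, (tau_iff (arcB_sub z hz) hy).2 hio.2⟩
  have denseC : ∀ x ∈ Scirc, ∀ y ∈ Scirc, Tau x y → ∃ z ∈ ArcC, Tau x z ∧ Tau z y := by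
    intro x hx y hy ht
    rw [tau_iff hx hy] at ht
    obtain ⟨z, hz, hio⟩ := exists_arcC (le_of_lt (H_mem hx).1) (le_of_lt (H_mem hy).2) ht
    exact ⟨z, hz, (tau_iff hx (arcC_sub z hz)).2 hio.1, (tau_iff (arcC_sub z hz) hy).2 hio.2⟩
  refine ⟨?_, ?_, denseA, denseB, denseC, ?_⟩
  · intro x hx y hy ht
    obtain ⟨z, hz, h1, h2⟩ := denseA x hx y hy ht
    exact ⟨z, arcA_sub z hz, h1, h2⟩
  · intro x hx
    constructor
    · obtain ⟨z, hz, hio⟩ := exists_arcA (le_of_lt (H_mem hx).1) (le_refl _) (H_mem hx).2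
      exact ⟨z, arcA_sub z hz, (tau_iff hx (arcA_sub z hz)).2 hio.1⟩
    · obtain ⟨z, hz, hio⟩ := exists_arcA (le_refl _) (le_of_lt (H_mem hx).2) (H_mem hx).1
      exact ⟨z, arcA_sub z hz, (tau_iff (arcA_sub z hz) hx).2 hio.2⟩
  · refine ⟨fQ, ⟨fun x _ => Set.mem_univ _, ?_, ?_⟩, fun x hx y hy => tau_iff_fQ hx hy, ?_, ?_, ?_⟩
    · intro x hx y hy h
      rw [fQ_spec hx, fQ_spec hy] at h
      exact congrArg Subtype.val (scircIso.injective h)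
    · intro p _
      exact ⟨(scircIso.symm p).1, (scircIso.symm p).2, fQ_symm p⟩
    all_goals {
      intro p q hpq
      set x := (scircIso.symm p).1 with hxd
      set y := (scircIso.symm q).1 with hyd
      have hx : x ∈ Scirc := (scircIso.symm p).2
      have hy : y ∈ Scirc := (scircIso.symm q).2
      have ht : Tau x y := by
        rw [tau_iff_fQ hx hy, hxd, hyd, fQ_symm, fQ_symm]; exact hpq
      first
      | (obtain ⟨z, hz, h1, h2⟩ := denseA x hx y hy ht
         refine ⟨z, hz, ?_, ?_⟩
         · rw [← fQ_symm p]; exact (tau_iff_fQ hx (arcA_sub z hz)).1 h1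
         · rw [← fQ_symm q]; exact (tau_iff_fQ (arcA_sub z hz) hy).1 h2)
      | (obtain ⟨z, hz, h1, h2⟩ := denseB x hx y hy ht
         refine ⟨z, hz, ?_, ?_⟩
         · rw [← fQ_symm p]; exact (tau_iff_fQ hx (arcB_sub z hz)).1 h1
         · rw [← fQ_symm q]; exact (tau_iff_fQ (arcB_sub z hz) hy).1 h2)
      | (obtain ⟨z, hz, h1, h2⟩ := denseC x hx y hy ht
         refine ⟨z, hz, ?_, ?_⟩
         · rw [← fQ_symm p]; exact (tau_iff_fQ hx (arcC_sub z hz)).1 h1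
         · rw [← fQ_symm q]; exact (tau_iff_fQ (arcC_sub z hz) hy).1 h2) }

end
end TauAux

/-- `τ` is a dense linear order on `S` without endpoints, each of
`A`, `B`, `C` is dense in `⟨S, τ⟩`; hence `⟨S, τ, A, B, C⟩` is isomorphic to
`ℚ` partitioned into three dense sets. -/
theorem tau_DLO_three_dense_parts :
    (∀ x ∈ Scirc, ∀ y ∈ Scirc, Tau x y → ∃ z ∈ Scirc, Tau x z ∧ Tau z y) ∧
    (∀ x ∈ Scirc, (∃ y ∈ Scirc, Tau x y) ∧ (∃ y ∈ Scirc, Tau y x)) ∧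
    (∀ x ∈ Scirc, ∀ y ∈ Scirc, Tau x y → ∃ z ∈ ArcA, Tau x z ∧ Tau z y) ∧
    (∀ x ∈ Scirc, ∀ y ∈ Scirc, Tau x y → ∃ z ∈ ArcB, Tau x z ∧ Tau z y) ∧
    (∀ x ∈ Scirc, ∀ y ∈ Scirc, Tau x y → ∃ z ∈ ArcC, Tau x z ∧ Tau z y) ∧
    (∃ f : ℂ → ℚ, Set.BijOn f Scirc Set.univ ∧
      (∀ x ∈ Scirc, ∀ y ∈ Scirc, (Tau x y ↔ f x < f y)) ∧
      (∀ p q : ℚ, p < q → ∃ a ∈ ArcA, p < f a ∧ f a < q) ∧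
      (∀ p q : ℚ, p < q → ∃ b ∈ ArcB, p < f b ∧ f b < q) ∧
      (∀ p q : ℚ, p < q → ∃ c ∈ ArcC, p < f c ∧ f c < q)) := by
  exact tau_final
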